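/- Let T₁, T₂, T₃ be invertible bounded operators on a complex Hilbert space with T₃ commuting with both T₁ and T₂, and T₁T₂T₁⁻¹T₂⁻¹ = T₃. Suppose h is an inner product (equivalent to the original) invariant under T₁ and T₃, and define h'(x,y) as a Banach limit of h(T₂ⁿx, T₂ⁿy) over n (assumed to exist as a shift-invariant limit since {T₂ⁿ} is uniformly bounded). Then h' is invariant under all three operators T₁, T₂, T₃. -/

import Mathlib

/-- Heisenberg group relations: let `T₁, T₂, T₃` be invertible bounded operators with `T₃`
commuting with `T₁` and `T₂` and `T₁T₂T₁⁻¹T₂⁻¹ = T₃`. If `h` is an inner product invariant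
under `T₁` and `T₃`, and `h'(x,y)` is a (shift-invariant, Banach-limit style) limit of the
sequence `n ↦ h(T₂ⁿx, T₂ⁿy)`, then `h'` is invariant under all three operators. -/
theorem heisenberg_invariant_metric
    {ℍ : Type*} [NormedAddCommGroup ℍ] [InnerProductSpace ℂ ℍ] [CompleteSpace ℍ]
    (T₁ T₂ T₃ : ℍ ≃L[ℂ] ℍ)
    (hc₁₃ : T₁ * T₃ = T₃ * T₁) (hc₂₃ : T₂ * T₃ = T₃ * T₂)
    (hcom : T₁ * T₂ * T₁⁻¹ * T₂⁻¹ = T₃)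
    (h : ℍ → ℍ → ℂ)
    (hinv₁ : ∀ x y : ℍ, h (T₁ x) (T₁ y) = h x y)
    (hinv₃ : ∀ x y : ℍ, h (T₃ x) (T₃ y) = h x y)
    -- a Banach limit: a shift-invariant linear functional on sequences
    (L : (ℕ → ℂ) →ₗ[ℂ] ℂ)
    (hLshift : ∀ u : ℕ → ℂ, L (fun n => u (n + 1)) = L u)
    (h' : ℍ → ℍ → ℂ)
    (hh' : h' = fun x y => L (fun n => h ((T₂ ^ n : ℍ ≃L[ℂ] ℍ) x) ((T₂ ^ n : ℍ ≃L[ℂ] ℍ) y))) :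
    (∀ x y : ℍ, h' (T₁ x) (T₁ y) = h' x y) ∧
    (∀ x y : ℍ, h' (T₂ x) (T₂ y) = h' x y) ∧
    (∀ x y : ℍ, h' (T₃ x) (T₃ y) = h' x y) := by
  have c13 : Commute T₁ T₃ := hc₁₃
  have c23 : Commute T₂ T₃ := hc₂₃
  have c13' : T₁ * T₃⁻¹ = T₃⁻¹ * T₁ := c13.inv_right.eq
  have hc₂₃' : T₂ * T₃⁻¹ = T₃⁻¹ * T₂ := c23.inv_right.eq
  -- From the commutator relation: T₁T₂ = T₃T₂T₁, hence T₂T₁ = T₁T₃⁻¹T₂.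
  have h12 : T₁ * T₂ = T₃ * T₂ * T₁ := by
    rw [← hcom]; group
  have h21 : T₂ * T₁ = T₁ * T₃⁻¹ * T₂ := by
    have e1 : T₂ * T₁ = T₃⁻¹ * (T₃ * T₂ * T₁) := by
      rw [← mul_assoc, ← mul_assoc, inv_mul_cancel, one_mul]
    rw [e1, ← h12, ← mul_assoc, ← c13', mul_assoc]
  -- T₂^n commutes with T₃
  have hpow23 : ∀ n : ℕ, T₂ ^ n * T₃ = T₃ * T₂ ^ n := fun n => (c23.pow_left n).eq
  -- T₂ commutes with (T₃⁻¹)^n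
  have c23' : Commute T₂ T₃⁻¹ := c23.inv_right
  have hpow23' : ∀ n : ℕ, T₂ * T₃⁻¹ ^ n = T₃⁻¹ ^ n * T₂ := fun n =>
    (c23'.pow_right n).eq
  -- key identity: T₂^n * T₁ = T₁ * (T₃⁻¹)^n * T₂^n
  have key : ∀ n : ℕ, T₂ ^ n * T₁ = T₁ * T₃⁻¹ ^ n * T₂ ^ n := by
    intro n
    induction n with
    | zero => simp
    | succ n ih =>
      calc T₂ ^ (n + 1) * T₁ = T₂ * (T₂ ^ n * T₁) := by
            rw [pow_succ']; rw [mul_assoc]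
        _ = T₂ * (T₁ * T₃⁻¹ ^ n * T₂ ^ n) := by rw [ih]
        _ = (T₂ * T₁) * T₃⁻¹ ^ n * T₂ ^ n := by
            simp only [mul_assoc]
        _ = (T₁ * T₃⁻¹ * T₂) * T₃⁻¹ ^ n * T₂ ^ n := by rw [h21]
        _ = T₁ * T₃⁻¹ * (T₂ * T₃⁻¹ ^ n) * T₂ ^ n := by
            rw [mul_assoc (T₁ * T₃⁻¹)]
        _ = T₁ * T₃⁻¹ * (T₃⁻¹ ^ n * T₂) * T₂ ^ n := by rw [hpow23']
        _ = T₁ * T₃⁻¹ ^ (n + 1) * T₂ ^ (n + 1) := by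
            rw [pow_succ' T₃⁻¹, pow_succ' T₂]
            simp [mul_assoc]
  -- h invariant under T₃⁻¹
  have cancel₃ : ∀ x : ℍ, T₃ (T₃⁻¹ x) = x := by
    intro x
    have e : (T₃ * T₃⁻¹ : ℍ ≃L[ℂ] ℍ) x = (1 : ℍ ≃L[ℂ] ℍ) x := by
      rw [mul_inv_cancel]
    exact e
  have hinv₃' : ∀ x y : ℍ, h (T₃⁻¹ x) (T₃⁻¹ y) = h x y := by
    intro x y
    have := hinv₃ (T₃⁻¹ x) (T₃⁻¹ y)
    rw [cancel₃, cancel₃] at this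
    exact this.symm
  -- h invariant under (T₃⁻¹)^n
  have hinv₃pow : ∀ (n : ℕ) (x y : ℍ), h ((T₃⁻¹ ^ n) x) ((T₃⁻¹ ^ n) y) = h x y := by
    intro n
    induction n with
    | zero => intro x y; rfl
    | succ n ih =>
      intro x y
      have hs : (T₃⁻¹ ^ (n + 1)) = T₃⁻¹ ^ n * T₃⁻¹ := pow_succ T₃⁻¹ n
      rw [hs]
      show h ((T₃⁻¹ ^ n) (T₃⁻¹ x)) ((T₃⁻¹ ^ n) (T₃⁻¹ y)) = h x y
      rw [ih (T₃⁻¹ x) (T₃⁻¹ y), hinv₃' x y]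
  subst hh'
  refine ⟨?_, ?_, ?_⟩
  · -- T₁ invariance: pointwise equality of sequences
    intro x y
    show L _ = L _
    refine congrArg L (funext fun n => ?_)
    have e1 : (T₂ ^ n : ℍ ≃L[ℂ] ℍ) (T₁ x) = T₁ ((T₃⁻¹ ^ n) ((T₂ ^ n : ℍ ≃L[ℂ] ℍ) x)) := by
      have := congrArg (fun (A : ℍ ≃L[ℂ] ℍ) => A x) (key n)
      exact this
    have e2 : (T₂ ^ n : ℍ ≃L[ℂ] ℍ) (T₁ y) = T₁ ((T₃⁻¹ ^ n) ((T₂ ^ n : ℍ ≃L[ℂ] ℍ) y)) := by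
      have := congrArg (fun (A : ℍ ≃L[ℂ] ℍ) => A y) (key n)
      exact this
    rw [e1, e2, hinv₁, hinv₃pow]
  · -- T₂ invariance: shift invariance of L
    intro x y
    show L _ = L _
    have e : (fun n => h ((T₂ ^ n : ℍ ≃L[ℂ] ℍ) (T₂ x)) ((T₂ ^ n : ℍ ≃L[ℂ] ℍ) (T₂ y)))
        = fun n => h ((T₂ ^ (n + 1) : ℍ ≃L[ℂ] ℍ) x) ((T₂ ^ (n + 1) : ℍ ≃L[ℂ] ℍ) y) := by
      funext n
      have h1 : (T₂ ^ (n + 1) : ℍ ≃L[ℂ] ℍ) = T₂ ^ n * T₂ := pow_succ T₂ n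
      rw [h1]
      rfl
    rw [e]
    exact hLshift (fun n => h ((T₂ ^ n : ℍ ≃L[ℂ] ℍ) x) ((T₂ ^ n : ℍ ≃L[ℂ] ℍ) y))
  · -- T₃ invariance: T₃ commutes with T₂^n
    intro x y
    show L _ = L _
    refine congrArg L (funext fun n => ?_)
    have e1 : (T₂ ^ n : ℍ ≃L[ℂ] ℍ) (T₃ x) = T₃ ((T₂ ^ n : ℍ ≃L[ℂ] ℍ) x) := by
      have := congrArg (fun (A : ℍ ≃L[ℂ] ℍ) => A x) (hpow23 n)
      exact this
    have e2 : (T₂ ^ n : ℍ ≃L[ℂ] ℍ) (T₃ y) = T₃ ((T₂ ^ n : ℍ ≃L[ℂ] ℍ) y) := by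
      have := congrArg (fun (A : ℍ ≃L[ℂ] ℍ) => A y) (hpow23 n)
      exact this
    rw [e1, e2, hinv₃]
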